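/- arXiv:math/0703102 — 3 statements merged into one kernel-verified Lean document; each statement's English description precedes it below -/
import Mathlib

section
/- For every n ≥ 1, the major index and the inversion number are equidistributed on the symmetric group S_n; that is, ∑_{σ∈S_n} q^{maj σ} = ∑_{σ∈S_n} q^{inv σ}. -/
/-- Descent set (ligne of route) of a word, with 1-based positions. -/
def ligne (w : List ℕ) : Finset ℕ :=
  (Finset.Icc 1 (w.length - 1)).filter (fun i => w.getD (i-1) 0 > w.getD i 0)

/-- Major index of a word. -/
def maj (w : List ℕ) : ℕ := ∑ i ∈ ligne w, i

/-- Inversion number of a word. -/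
def inv (w : List ℕ) : ℕ :=
  ((Finset.range w.length ×ˢ Finset.range w.length).filter
    (fun p => p.1 < p.2 ∧ w.getD p.1 0 > w.getD p.2 0)).card

/-- `w` is (the one-line word of) a permutation of `1,…,n`. -/
def IsPermWord (n : ℕ) (w : List ℕ) : Prop := w.Perm (List.range' 1 n)

/-- One-line word of `σ ∈ S_n` with values in `1,…,n`. -/
def toWord {n : ℕ} (σ : Equiv.Perm (Fin n)) : List ℕ := List.ofFn (fun i => (σ i : ℕ) + 1)

/-- Subexcedent word: `0 ≤ d_i ≤ i-1` (1-based), i.e. `d_i ≤ i` for 0-based `i`. -/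
def Subexcedent (w : List ℕ) : Prop := ∀ i < w.length, w.getD i 0 ≤ i

/-- Subdiagonal word: `0 ≤ d_i ≤ n-i` (1-based). -/
def Subdiagonal (w : List ℕ) : Prop := ∀ i < w.length, w.getD i 0 + i + 1 ≤ w.length

/-- Lehmer code: `d_i = #{j < i : x_j > x_i}`. -/
def invcode (w : List ℕ) : List ℕ :=
  (List.range w.length).map (fun i => ((Finset.range i).filter (fun j => w.getD j 0 > w.getD i 0)).card)

/-- `Lc`-code: `d_i = #{j > i : x_i > x_j}`. -/
def lc (w : List ℕ) : List ℕ :=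
  (List.range w.length).map (fun i => ((Finset.Ico (i+1) w.length).filter (fun j => w.getD i 0 > w.getD j 0)).card)

/-- Major index code: `d_i = maj(σ|_i) - maj(σ|_{i-1})`, where `σ|_i` erases letters `> i`. -/
def majcode (w : List ℕ) : List ℕ :=
  (List.range w.length).map (fun i => maj (w.filter (· ≤ i+1)) - maj (w.filter (· ≤ i)))

/-- `Mc`-code: `d_i = maj(σ^{(i)}) - maj(σ^{(i+1)})`, where `σ^{(i)}` erases letters `< i`. -/
def mc (w : List ℕ) : List ℕ :=
  (List.range w.length).map (fun i => maj (w.filter (fun x => i+1 ≤ x)) - maj (w.filter (fun x => i+2 ≤ x)))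

/-- One-line word of the inverse permutation. -/
def invWord (w : List ℕ) : List ℕ :=
  (List.range w.length).map (fun i => w.idxOf (i+1) + 1)

/-- `Ic σ = Lc (σ⁻¹)`. -/
def ic (w : List ℕ) : List ℕ := lc (invWord w)

/-- Inverse ligne of route. -/
def iligne (w : List ℕ) : Finset ℕ := ligne (invWord w)

/-- Complement map `δ` on codes: `δ(d₁⋯d_n) = (0-d₁)(1-d₂)⋯(n-1-d_n)`. -/
def deltaC (w : List ℕ) : List ℕ :=
  (List.range w.length).map (fun i => i - w.getD i 0)

/-- Nondecreasing rearrangement of a word. -/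
def sortW (w : List ℕ) : List ℕ := List.insertionSort (· ≤ ·) w

/-- Set-valued statistic `El = Ligne ∘ Mc⁻¹` on subdiagonal words. -/
noncomputable def El (d : List ℕ) : Finset ℕ := by
  classical
  exact if h : ∃ w, IsPermWord d.length w ∧ mc w = d then ligne h.choose else ∅

/-- Set-valued statistic `Eul = Ligne ∘ Majcode⁻¹` on subexcedent words. -/
noncomputable def Eul (d : List ℕ) : Finset ℕ := by
  classical
  exact if h : ∃ w, IsPermWord d.length w ∧ majcode w = d then ligne h.choose else ∅

section MacMahonAux


lemma getD_insertIdx_of_lt (w : List ℕ) (v : ℕ) {j k : ℕ} (hk : k < j) (hkw : k < w.length) :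
    (w.insertIdx j v).getD k 0 = w.getD k 0 := by
  rw [List.getD_eq_getElem _ _ (by
    have := List.length_le_length_insertIdx (l := w) (x := v) (i := j); omega),
    List.getD_eq_getElem _ _ hkw]
  exact List.getElem_insertIdx_of_lt hk _

lemma getD_insertIdx_self (w : List ℕ) (v : ℕ) {j : ℕ} (hj : j ≤ w.length) :
    (w.insertIdx j v).getD j 0 = v := by
  rw [List.getD_eq_getElem _ _ (by rw [List.length_insertIdx_of_le_length hj]; omega)]
  exact List.getElem_insertIdx_self _

lemma getD_insertIdx_of_gt (w : List ℕ) (v : ℕ) {j k : ℕ} (hk : j < k) (hkw : k ≤ w.length) :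
    (w.insertIdx j v).getD k 0 = w.getD (k-1) 0 := by
  obtain ⟨k0, rfl⟩ : ∃ k0, k = j + k0 + 1 := ⟨k - j - 1, by omega⟩
  rw [List.getD_eq_getElem _ _ (by rw [List.length_insertIdx_of_le_length (by omega)]; omega),
    List.getD_eq_getElem _ _ (show j + k0 + 1 - 1 < w.length by omega)]
  simp only [Nat.add_sub_cancel]
  exact List.getElem_insertIdx_add_succ w v j k0 (by omega)

lemma mem_ligne {w : List ℕ} {i : ℕ} :
    i ∈ ligne w ↔ (1 ≤ i ∧ i ≤ w.length - 1) ∧ w.getD (i-1) 0 > w.getD i 0 := by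
  simp [ligne, Finset.mem_filter, Finset.mem_Icc, and_assoc]

lemma ligne_insertIdx (w : List ℕ) (v j : ℕ) (hj : j ≤ w.length)
    (hv : ∀ x ∈ w, x < v) :
    ligne (w.insertIdx j v) =
      ((ligne w).filter (· < j)) ∪ ((ligne w).filter (j < ·)).image (· + 1) ∪
        (if j < w.length then {j + 1} else ∅) := by
  have hlen : (w.insertIdx j v).length = w.length + 1 := List.length_insertIdx_of_le_length hj _
  have hvD : ∀ k, k < w.length → w.getD k 0 < v := by
    intro k hk
    rw [List.getD_eq_getElem _ _ hk]
    exact hv _ (List.getElem_mem _)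
  ext i
  simp only [Finset.mem_union, Finset.mem_filter, Finset.mem_image, mem_ligne, hlen,
    Nat.add_sub_cancel]
  constructor
  · rintro ⟨⟨h1, h2⟩, hd⟩
    rcases lt_trichotomy i j with h | h | h
    · -- i < j : descent of w
      rw [getD_insertIdx_of_lt w v (by omega) (by omega),
        getD_insertIdx_of_lt w v (by omega) (by omega)] at hd
      exact Or.inl (Or.inl ⟨⟨⟨h1, by omega⟩, hd⟩, h⟩)
    · -- i = j : not a descent
      subst h
      rw [getD_insertIdx_of_lt w v (by omega) (by omega),
        getD_insertIdx_self w v hj] at hd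
      exact absurd hd (by have := hvD (i-1) (by omega); omega)
    · rcases Nat.eq_or_lt_of_le h with h' | h'
      · -- i = j + 1
        have hjl : j < w.length := by omega
        right
        simp only [if_pos hjl, Finset.mem_singleton]
        omega
      · -- i > j + 1 : shifted descent
        rw [getD_insertIdx_of_gt w v (by omega) (by omega),
          getD_insertIdx_of_gt w v (by omega) (by omega)] at hd
        exact Or.inl (Or.inr ⟨i - 1, ⟨⟨⟨by omega, by omega⟩, hd⟩, by omega⟩, by omega⟩)
  · rintro ((⟨⟨⟨ha, hb⟩, hd⟩, hij⟩ | ⟨i', ⟨⟨⟨ha, hb⟩, hd⟩, hij⟩, rfl⟩) | hcase)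
    · refine ⟨⟨ha, by omega⟩, ?_⟩
      rw [getD_insertIdx_of_lt w v (by omega) (by omega),
        getD_insertIdx_of_lt w v (by omega) (by omega)]
      exact hd
    · refine ⟨⟨by omega, by omega⟩, ?_⟩
      simp only [Nat.add_sub_cancel]
      rw [getD_insertIdx_of_gt w v (by omega) (by omega),
        getD_insertIdx_of_gt w v (by omega) (by omega)]
      simp only [Nat.add_sub_cancel]
      exact hd
    · have hjl : j < w.length ∧ i = j + 1 := by
        by_cases h : j < w.length <;> simp [h] at hcase <;> tauto
      obtain ⟨hjl, rfl⟩ := hjl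
      refine ⟨⟨by omega, by omega⟩, ?_⟩
      rw [show j + 1 - 1 = j by omega, getD_insertIdx_self w v hj,
        getD_insertIdx_of_gt w v (by omega) (by omega)]
      simp only [Nat.add_sub_cancel]
      exact hvD j hjl

def delta (w : List ℕ) (j : ℕ) : ℕ :=
  if j = w.length then 0
  else 1 + ((ligne w).filter (j < ·)).card + (if j ∈ ligne w then 0 else j)

lemma maj_insertIdx (w : List ℕ) (v j : ℕ) (hj : j ≤ w.length) (hv : ∀ x ∈ w, x < v) :
    maj (w.insertIdx j v) = maj w + delta w j := by
  classical
  have hD : ∀ i ∈ ligne w, 1 ≤ i ∧ i ≤ w.length - 1 := fun i hi => (mem_ligne.mp hi).1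
  rw [maj, ligne_insertIdx w v j hj hv]
  have hAB : Disjoint ((ligne w).filter (· < j))
      (((ligne w).filter (j < ·)).image (· + 1)) := by
    rw [Finset.disjoint_left]
    intro a ha hb
    simp only [Finset.mem_filter, Finset.mem_image] at ha hb
    omega
  have hC : Disjoint (((ligne w).filter (· < j)) ∪ ((ligne w).filter (j < ·)).image (· + 1))
      (if j < w.length then ({j + 1} : Finset ℕ) else ∅) := by
    split_ifs
    · rw [Finset.disjoint_right]
      intro a ha hb
      simp only [Finset.mem_singleton] at ha
      subst ha
      simp only [Finset.mem_union, Finset.mem_filter, Finset.mem_image] at hb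
      omega
    · exact Finset.disjoint_empty_right _
  rw [Finset.sum_union hC, Finset.sum_union hAB,
    Finset.sum_image (by intro a _ b _ h; simp only at h; omega)]
  have himg : ∑ i ∈ (ligne w).filter (j < ·), (i + 1) =
      (∑ i ∈ (ligne w).filter (j < ·), i) + ((ligne w).filter (j < ·)).card := by
    rw [Finset.sum_add_distrib, Finset.sum_const, smul_eq_mul, mul_one]
  rw [himg]
  have hsplit : maj w = (∑ i ∈ (ligne w).filter (· < j), i) +
      (∑ i ∈ (ligne w).filter (j < ·), i) + (if j ∈ ligne w then j else 0) := by
    rw [maj, ← Finset.sum_filter_add_sum_filter_not (ligne w) (· < j)]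
    have h2 : ∑ i ∈ (ligne w).filter (fun i => ¬ i < j), i =
        (∑ i ∈ (ligne w).filter (j < ·), i) + (if j ∈ ligne w then j else 0) := by
      have : (ligne w).filter (fun i => ¬ i < j) =
          ((ligne w).filter (j < ·)) ∪ ((ligne w).filter (· = j)) := by
        ext a
        simp only [Finset.mem_filter, Finset.mem_union]
        constructor
        · rintro ⟨ha, h⟩
          rcases Nat.lt_or_ge j a with h' | h'
          · exact Or.inl ⟨ha, h'⟩
          · exact Or.inr ⟨ha, by omega⟩
        · rintro (⟨ha, h⟩ | ⟨ha, h⟩) <;> exact ⟨ha, by omega⟩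
      rw [this, Finset.sum_union (by
        rw [Finset.disjoint_left]; intro a ha hb
        simp only [Finset.mem_filter] at ha hb; omega)]
      congr 1
      rw [Finset.filter_eq']
      split_ifs <;> simp
    omega
  rw [hsplit, delta]
  by_cases hjn : j = w.length
  · subst hjn
    have hB : (ligne w).filter (w.length < ·) = ∅ := by
      rw [Finset.filter_eq_empty_iff]
      intro a ha
      have := hD a ha
      omega
    have hjD : w.length ∉ ligne w := by
      intro h
      have := hD _ h
      omega
    simp [hB, hjD]
  · have hjlt : j < w.length := by omega
    simp only [if_pos hjlt, if_neg hjn, Finset.sum_singleton]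
    split_ifs <;> ring

lemma delta_card_lt {w : List ℕ} {j j' : ℕ} (h : j < j') (hj' : j' ∈ ligne w) :
    ((ligne w).filter (j' < ·)).card < ((ligne w).filter (j < ·)).card := by
  apply Finset.card_lt_card
  constructor
  · intro a ha
    simp only [Finset.mem_filter] at ha ⊢
    exact ⟨ha.1, by omega⟩
  · intro hsub
    have : j' ∈ (ligne w).filter (j < ·) := by
      simp only [Finset.mem_filter]; exact ⟨hj', h⟩
    have := hsub this
    simp only [Finset.mem_filter] at this
    omega

lemma delta_card_le {w : List ℕ} {j j' : ℕ} (h : j < j') (hj' : j' ∉ ligne w) :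
    ((ligne w).filter (j < ·)).card + j + 1 ≤ ((ligne w).filter (j' < ·)).card + j' := by
  have hsub : (ligne w).filter (j < ·) ⊆ ((ligne w).filter (j' < ·)) ∪ Finset.Ioo j j' := by
    intro a ha
    simp only [Finset.mem_filter] at ha
    simp only [Finset.mem_union, Finset.mem_filter, Finset.mem_Ioo]
    rcases Nat.lt_or_ge j' a with h' | h'
    · exact Or.inl ⟨ha.1, h'⟩
    · refine Or.inr ⟨ha.2, ?_⟩
      rcases Nat.eq_or_lt_of_le h' with h'' | h''
      · exact absurd (h'' ▸ ha.1) hj'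
      · exact h''
  have := (Finset.card_le_card hsub).trans (Finset.card_union_le _ _)
  rw [Nat.card_Ioo] at this
  omega

lemma delta_card_bound {w : List ℕ} {j : ℕ} (h : j < w.length) :
    ((ligne w).filter (j < ·)).card + j + 1 ≤ w.length := by
  have hsub : (ligne w).filter (j < ·) ⊆ Finset.Ioc j (w.length - 1) := by
    intro a ha
    simp only [Finset.mem_filter, mem_ligne] at ha
    simp only [Finset.mem_Ioc]
    omega
  have := Finset.card_le_card hsub
  rw [Nat.card_Ioc] at this
  omega

lemma delta_le {w : List ℕ} {j : ℕ} (h : j ≤ w.length) : delta w j ≤ w.length := by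
  rw [delta]
  split_ifs with h1 h2
  · omega
  · have := delta_card_bound (w := w) (j := j) (by omega)
    have : 1 ≤ j := (mem_ligne.mp h2).1.1
    have := delta_card_bound (w := w) (j := j) (by omega)
    omega
  · have := delta_card_bound (w := w) (j := j) (by omega)
    omega

lemma delta_injOn (w : List ℕ) :
    Set.InjOn (delta w) (Finset.range (w.length + 1)) := by
  have key : ∀ j j', j < j' → j' ≤ w.length → delta w j ≠ delta w j' := by
    intro j j' hlt hle
    have hjn : j ≠ w.length := by omega
    rw [delta, delta, if_neg hjn]
    by_cases h1 : j' = w.length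
    · rw [if_pos h1]; omega
    · rw [if_neg h1]
      by_cases h2 : j' ∈ ligne w
      · have := delta_card_lt hlt h2
        simp only [if_pos h2]
        split_ifs <;> omega
      · have := delta_card_le hlt h2
        simp only [if_neg h2]
        split_ifs <;> omega
  intro a ha b hb hab
  simp only [Finset.coe_range, Set.mem_Iio] at ha hb
  rcases lt_trichotomy a b with h | h | h
  · exact absurd hab (key a b h (by omega))
  · exact h
  · exact absurd hab.symm (key b a h (by omega))

lemma sum_pow_delta (w : List ℕ) (q : ℚ) :
    ∑ j ∈ Finset.range (w.length + 1), q ^ delta w j =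
      ∑ j ∈ Finset.range (w.length + 1), q ^ j := by
  have himg : (Finset.range (w.length + 1)).image (delta w) =
      Finset.range (w.length + 1) := by
    apply Finset.eq_of_subset_of_card_le
    · intro a ha
      simp only [Finset.mem_image] at ha
      obtain ⟨j, hj, rfl⟩ := ha
      simp only [Finset.mem_range] at hj ⊢
      have := delta_le (w := w) (j := j) (by omega)
      omega
    · rw [Finset.card_image_of_injOn (delta_injOn w)]
  conv_rhs => rw [← himg]
  rw [Finset.sum_image (fun a ha b hb h => delta_injOn w (by simpa using ha) (by simpa using hb) h)]


lemma inv_insertIdx (w : List ℕ) (v j : ℕ) (hj : j ≤ w.length) (hv : ∀ x ∈ w, x < v) :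
    inv (w.insertIdx j v) = inv w + (w.length - j) := by
  classical
  set n := w.length with hn
  have hlen : (w.insertIdx j v).length = n + 1 := List.length_insertIdx_of_le_length hj _
  have hvD : ∀ k, k < n → w.getD k 0 < v := by
    intro k hk
    rw [List.getD_eq_getElem _ _ hk]
    exact hv _ (List.getElem_mem _)
  set e : ℕ → ℕ := fun a => if a < j then a else a + 1 with he
  set φ : ℕ × ℕ → ℕ × ℕ := fun p => (e p.1, e p.2) with hφ
  have hval : ∀ a, a < n → (w.insertIdx j v).getD (e a) 0 = w.getD a 0 := by
    intro a ha
    rw [he]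
    dsimp only
    split_ifs with h
    · exact getD_insertIdx_of_lt w v h (by omega)
    · rw [getD_insertIdx_of_gt w v (by omega) (by omega)]
      simp
  have hU : ((Finset.range (n+1) ×ˢ Finset.range (n+1)).filter
        (fun p => p.1 < p.2 ∧ (w.insertIdx j v).getD p.1 0 > (w.insertIdx j v).getD p.2 0)) =
      (((Finset.range n ×ˢ Finset.range n).filter
        (fun p => p.1 < p.2 ∧ w.getD p.1 0 > w.getD p.2 0)).image φ) ∪
      ({j} ×ˢ Finset.Ico (j+1) (n+1)) := by
    ext ⟨a, b⟩
    simp only [Finset.mem_filter, Finset.mem_product, Finset.mem_range, Finset.mem_union,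
      Finset.mem_image, Finset.mem_singleton, Finset.mem_Ico, hφ, Prod.mk.injEq, Prod.exists]
    constructor
    · rintro ⟨⟨ha, hb⟩, hab, hgt⟩
      rcases lt_trichotomy a j with h | h | h
      · -- a < j, so u[a] = w[a] < v
        rcases lt_trichotomy b j with h' | h' | h'
        · left
          refine ⟨a, b, ⟨⟨by omega, by omega⟩, hab, ?_⟩, ?_, ?_⟩
          · rw [← hval a (by omega), ← hval b (by omega), he]
            simp only [if_pos h, if_pos h']
            exact hgt
          · simp [he, h]
          · simp [he, h']
        · -- b = j : u[a] = w[a] < v = u[b], contradiction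
          exfalso
          subst h'
          rw [getD_insertIdx_of_lt w v h (by omega), getD_insertIdx_self w v hj] at hgt
          have := hvD a (by omega)
          omega
        · left
          refine ⟨a, b - 1, ⟨⟨by omega, by omega⟩, by omega, ?_⟩, ?_, ?_⟩
          · rw [getD_insertIdx_of_lt w v h (by omega),
              getD_insertIdx_of_gt w v h' (by omega)] at hgt
            exact hgt
          · simp [he, h]
          · simp only [he]
            rw [if_neg (by omega)]
            omega
      · -- a = j
        subst h
        exact Or.inr ⟨rfl, by omega, by omega⟩
      · -- a > j, so b > j too
        left
        refine ⟨a - 1, b - 1, ⟨⟨by omega, by omega⟩, by omega, ?_⟩, ?_, ?_⟩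
        · rw [getD_insertIdx_of_gt w v h (by omega),
            getD_insertIdx_of_gt w v (by omega) (by omega)] at hgt
          exact hgt
        · simp only [he]; rw [if_neg (by omega)]; omega
        · simp only [he]; rw [if_neg (by omega)]; omega
    · rintro (⟨a', b', ⟨⟨ha, hb⟩, hab, hgt⟩, rfl, rfl⟩ | ⟨rfl, hb1, hb2⟩)
      · refine ⟨⟨?_, ?_⟩, ?_, ?_⟩
        · simp only [he]; split_ifs <;> omega
        · simp only [he]; split_ifs <;> omega
        · simp only [he]; split_ifs <;> omega
        · rw [hval a' (by omega), hval b' (by omega)]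
          exact hgt
      · refine ⟨⟨by omega, by omega⟩, by omega, ?_⟩
        rw [getD_insertIdx_self w v hj, getD_insertIdx_of_gt w v (by omega) (by omega)]
        exact hvD (b - 1) (by omega)
  have hdisj : Disjoint (((Finset.range n ×ˢ Finset.range n).filter
        (fun p => p.1 < p.2 ∧ w.getD p.1 0 > w.getD p.2 0)).image φ)
      ({j} ×ˢ Finset.Ico (j+1) (n+1)) := by
    rw [Finset.disjoint_right]
    rintro ⟨a, b⟩ hmem hmem'
    simp only [Finset.mem_product, Finset.mem_singleton, Finset.mem_Ico] at hmem
    simp only [Finset.mem_image, hφ, Prod.exists, Prod.mk.injEq] at hmem'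
    obtain ⟨a', b', _, rfl, rfl⟩ := hmem'
    have : e a' ≠ j := by simp only [he]; split_ifs <;> omega
    exact this hmem.1
  have hinj : Set.InjOn φ (((Finset.range n ×ˢ Finset.range n).filter
        (fun p => p.1 < p.2 ∧ w.getD p.1 0 > w.getD p.2 0)) : Finset (ℕ × ℕ)) := by
    rintro ⟨a, b⟩ _ ⟨a', b'⟩ _ hab
    simp only [hφ, he, Prod.mk.injEq] at hab
    obtain ⟨h1, h2⟩ := hab
    have : a = a' := by split_ifs at h1 <;> omega
    have : b = b' := by split_ifs at h2 <;> omega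
    simp_all
  rw [inv, hlen, hU, Finset.card_union_of_disjoint hdisj, Finset.card_image_of_injOn hinj]
  rw [inv, ← hn]
  congr 1
  rw [Finset.card_product, Finset.card_singleton, Nat.card_Ico]
  omega

def P (n : ℕ) : Finset (List ℕ) := ((List.range' 1 n).permutations).toFinset

lemma mem_P {n : ℕ} {w : List ℕ} : w ∈ P n ↔ w.Perm (List.range' 1 n) := by
  simp [P, List.mem_permutations]

lemma P_length {n : ℕ} {w : List ℕ} (h : w ∈ P n) : w.length = n := by
  rw [mem_P] at h
  simpa using h.length_eq

lemma P_lt {n : ℕ} {w : List ℕ} (h : w ∈ P n) : ∀ x ∈ w, x < n + 1 := by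
  rw [mem_P] at h
  intro x hx
  have := h.mem_iff.mp hx
  rw [List.mem_range'_1] at this
  omega

lemma P_not_mem {n : ℕ} {w : List ℕ} (h : w ∈ P n) : (n+1) ∉ w := by
  intro hmem
  exact absurd (P_lt h _ hmem) (by omega)

lemma insertIdx_eraseIdx_self {α : Type*} : ∀ (u : List α) (k : ℕ) (h : k < u.length),
    (u.eraseIdx k).insertIdx k u[k] = u
  | a :: u, 0, _ => rfl
  | a :: u, k+1, h => by
    simp only [List.eraseIdx_cons_succ, List.insertIdx_succ_cons, List.getElem_cons_succ]
    rw [insertIdx_eraseIdx_self u k (by simpa using h)]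

lemma indexOf_insertIdx {w : List ℕ} {v : ℕ} : ∀ {j : ℕ}, j ≤ w.length → v ∉ w →
    (w.insertIdx j v).idxOf v = j := by
  induction w with
  | nil =>
    intro j hj _
    have : j = 0 := by simpa using hj
    subst this
    simp
  | cons x w ih =>
    intro j hj hv
    match j with
    | 0 => simp
    | j + 1 =>
      rw [List.insertIdx_succ_cons, List.idxOf_cons_ne _ (by simp at hv; omega),
        ih (by simpa using hj) (by simp at hv; tauto)]

lemma perm_range'_succ {n : ℕ} {w : List ℕ} (h : w.Perm (List.range' 1 n)) {j : ℕ}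
    (hj : j ≤ w.length) : (w.insertIdx j (n+1)).Perm (List.range' 1 (n+1)) := by
  refine (List.perm_insertIdx _ _ hj).trans ?_
  rw [List.range'_1_concat]
  refine ((h.cons (n+1)).trans ?_)
  rw [show 1 + n = n + 1 by omega]
  exact (List.perm_append_singleton _ _).symm

lemma sum_P_succ (n : ℕ) (f : List ℕ → ℚ) :
    ∑ u ∈ P (n+1), f u =
      ∑ p ∈ (P n) ×ˢ Finset.range (n+1), f (p.1.insertIdx p.2 (n+1)) := by
  classical
  refine Finset.sum_nbij' (i := fun u => (u.eraseIdx (u.idxOf (n+1)), u.idxOf (n+1)))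
    (j := fun p => p.1.insertIdx p.2 (n+1)) ?_ ?_ ?_ ?_ ?_
  · -- forward membership
    intro u hu
    have hperm := mem_P.mp hu
    have hmem : (n+1) ∈ u := hperm.mem_iff.mpr (by rw [List.mem_range'_1]; omega)
    have hidx : u.idxOf (n+1) < u.length := List.idxOf_lt_length_iff.mpr hmem
    have hlen : u.length = n + 1 := by simpa using hperm.length_eq
    rw [Finset.mem_product]
    constructor
    · rw [mem_P, ← List.erase_eq_eraseIdx_of_idxOf rfl]
      refine (hperm.erase (n+1)).trans ?_
      rw [List.range'_1_concat, List.erase_append_right _ (by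
        rw [List.mem_range'_1]; omega), show 1 + n = n + 1 by omega,
        List.erase_cons_head, List.append_nil]
    · rw [Finset.mem_range]
      omega
  · -- backward membership
    rintro ⟨w, j⟩ hp
    rw [Finset.mem_product, Finset.mem_range] at hp
    obtain ⟨hw, hj⟩ := hp
    change w ∈ P n at hw
    change j < n + 1 at hj
    have hlen := P_length hw
    exact mem_P.mpr (perm_range'_succ (mem_P.mp hw) (show j ≤ w.length by omega))
  · -- left inverse
    intro u hu
    have hperm := mem_P.mp hu
    have hmem : (n+1) ∈ u := hperm.mem_iff.mpr (by rw [List.mem_range'_1]; omega)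
    have hidx : u.idxOf (n+1) < u.length := List.idxOf_lt_length_iff.mpr hmem
    have := insertIdx_eraseIdx_self u (u.idxOf (n+1)) hidx
    rwa [List.getElem_idxOf hidx] at this
  · -- right inverse
    rintro ⟨w, j⟩ hp
    rw [Finset.mem_product, Finset.mem_range] at hp
    obtain ⟨hw, hj⟩ := hp
    change w ∈ P n at hw
    change j < n + 1 at hj
    have hlen := P_length hw
    have hidx : (w.insertIdx j (n+1)).idxOf (n+1) = j :=
      indexOf_insertIdx (by omega) (P_not_mem hw)
    simp only [hidx, List.eraseIdx_insertIdx_self]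
  · -- value agreement
    intro u hu
    have hperm := mem_P.mp hu
    have hmem : (n+1) ∈ u := hperm.mem_iff.mpr (by rw [List.mem_range'_1]; omega)
    have hidx : u.idxOf (n+1) < u.length := List.idxOf_lt_length_iff.mpr hmem
    have := insertIdx_eraseIdx_self u (u.idxOf (n+1)) hidx
    rw [List.getElem_idxOf hidx] at this
    rw [this]

lemma main_eq (n : ℕ) (q : ℚ) :
    ∑ w ∈ P n, q ^ maj w = ∑ w ∈ P n, q ^ inv w := by
  induction n with
  | zero =>
    apply Finset.sum_congr rfl
    intro w hw
    rw [mem_P, show List.range' 1 0 = [] from rfl, List.perm_nil] at hw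
    subst hw
    rw [show maj [] = 0 by rfl, show inv [] = 0 by rfl]
  | succ n ih =>
    rw [sum_P_succ n (fun u => q ^ maj u), sum_P_succ n (fun u => q ^ inv u),
      Finset.sum_product, Finset.sum_product]
    have hmaj : ∀ w ∈ P n, ∑ j ∈ Finset.range (n+1), q ^ maj (w.insertIdx j (n+1)) =
        q ^ maj w * ∑ j ∈ Finset.range (n+1), q ^ j := by
      intro w hw
      have hlen := P_length hw
      have h1 : ∀ j ∈ Finset.range (n+1),
          q ^ maj (w.insertIdx j (n+1)) = q ^ maj w * q ^ delta w j := by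
        intro j hj
        rw [Finset.mem_range] at hj
        rw [maj_insertIdx w (n+1) j (by omega) (P_lt hw), pow_add]
      rw [Finset.sum_congr rfl h1, ← Finset.mul_sum]
      congr 1
      have := sum_pow_delta w q
      rw [hlen] at this
      exact this
    have hinv : ∀ w ∈ P n, ∑ j ∈ Finset.range (n+1), q ^ inv (w.insertIdx j (n+1)) =
        q ^ inv w * ∑ j ∈ Finset.range (n+1), q ^ j := by
      intro w hw
      have hlen := P_length hw
      have h1 : ∀ j ∈ Finset.range (n+1),
          q ^ inv (w.insertIdx j (n+1)) = q ^ inv w * q ^ (n - j) := by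
        intro j hj
        rw [Finset.mem_range] at hj
        rw [inv_insertIdx w (n+1) j (by omega) (P_lt hw), hlen, pow_add]
      rw [Finset.sum_congr rfl h1, ← Finset.mul_sum]
      congr 1
      have := Finset.sum_range_reflect (fun j => q ^ j) (n + 1)
      simpa using this
    rw [Finset.sum_congr rfl hmaj, Finset.sum_congr rfl hinv, ← Finset.sum_mul,
      ← Finset.sum_mul, ih]


lemma toWord_injective {n : ℕ} : Function.Injective (toWord (n := n)) := by
  intro σ τ h
  rw [toWord, toWord] at h
  have h2 := List.ofFn_injective h
  ext i
  have h3 : (σ i : ℕ) + 1 = (τ i : ℕ) + 1 := congrFun h2 i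
  have h4 : (σ i : ℕ) = (τ i : ℕ) := by omega
  exact h4

lemma toWord_mem_P {n : ℕ} (σ : Equiv.Perm (Fin n)) : toWord σ ∈ P n := by
  rw [mem_P]
  apply List.perm_of_nodup_nodup_toFinset_eq
  · exact List.nodup_ofFn.mpr (fun i j h => by
      have h' : (σ i : ℕ) + 1 = (σ j : ℕ) + 1 := h
      exact σ.injective (Fin.ext (by omega)))
  · exact List.nodup_range' (s := 1) (n := n)
  · ext x
    simp only [List.mem_toFinset, toWord, List.mem_ofFn, Set.mem_range, List.mem_range'_1]
    constructor
    · rintro ⟨i, rfl⟩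
      have := (σ i).isLt
      omega
    · rintro ⟨h1, h2⟩
      refine ⟨σ.symm ⟨x - 1, by omega⟩, ?_⟩
      rw [Equiv.apply_symm_apply]
      simp only
      omega

lemma card_P (n : ℕ) : (P n).card = n.factorial := by
  rw [P, List.toFinset_card_of_nodup (List.nodup_permutations _ (List.nodup_range' (s := 1) (n := n))),
    List.length_permutations, List.length_range']

lemma sum_perm_eq (n : ℕ) (f : List ℕ → ℚ) :
    ∑ σ : Equiv.Perm (Fin n), f (toWord σ) = ∑ w ∈ P n, f w := by
  classical
  have himg : (Finset.univ.image (toWord (n := n))) = P n := by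
    apply Finset.eq_of_subset_of_card_le
    · intro w hw
      simp only [Finset.mem_image, Finset.mem_univ, true_and] at hw
      obtain ⟨σ, rfl⟩ := hw
      exact toWord_mem_P σ
    · rw [card_P, Finset.card_image_of_injective _ toWord_injective, Finset.card_univ,
        Fintype.card_perm, Fintype.card_fin]
  rw [← himg, Finset.sum_image (fun a _ b _ h => toWord_injective h)]

end MacMahonAux

theorem stmt0 (n : ℕ) (hn : 1 ≤ n) (q : ℚ) :
    ∑ σ : Equiv.Perm (Fin n), q ^ maj (toWord σ) =
      ∑ σ : Equiv.Perm (Fin n), q ^ inv (toWord σ) := by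
  rw [sum_perm_eq n (fun w => q ^ maj w), sum_perm_eq n (fun w => q ^ inv w)]
  exact main_eq n q
end

section
/- The major index code Majcode is a bijection from S_n onto the set SE_n of subexcedent words of length n, and the sum of the letters of Majcode σ equals maj σ. -/
def F (w : List ℕ) (i : ℕ) : ℕ := if w.getD i 0 > w.getD (i+1) 0 then i+1 else 0

/-- number of descents at 0-based positions ≥ p -/
def S (w : List ℕ) (p : ℕ) : ℕ :=
  ∑ i ∈ Finset.Ico p (w.length - 1), (if w.getD i 0 > w.getD (i+1) 0 then 1 else 0)

/-- maj increment when inserting a maximal letter at position p -/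
def g (u : List ℕ) (p : ℕ) : ℕ :=
  if p = u.length then 0
  else (if 0 < p ∧ u.getD (p-1) 0 > u.getD p 0 then 1 else p+1) + S u p

-- getD facts for v = a ++ m :: b
lemma getD_mid (a b : List ℕ) (m : ℕ) : (a ++ m :: b).getD a.length 0 = m := by
  rw [List.getD_append_right _ _ _ _ le_rfl]; simp

lemma getD_right (a b : List ℕ) (m i : ℕ) :
    (a ++ m :: b).getD (a.length + 1 + i) 0 = b.getD i 0 := by
  rw [List.getD_append_right _ _ _ _ (by omega)]
  have : a.length + 1 + i - a.length = i + 1 := by omega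
  rw [this]; simp [List.getD]

lemma getD_left (a b : List ℕ) (m i : ℕ) (h : i < a.length) :
    (a ++ m :: b).getD i 0 = (a ++ b).getD i 0 := by
  rw [List.getD_append _ _ _ _ h, List.getD_append _ _ _ _ h]

lemma getD_u_right (a b : List ℕ) (i : ℕ) :
    (a ++ b).getD (a.length + i) 0 = b.getD i 0 := by
  rw [List.getD_append_right _ _ _ _ (by omega)]
  congr 1; omega

/-- boundary: prefix sums of F over `range a.length` differ only at the junction -/
lemma sum_prefix (a b : List ℕ) (m : ℕ) (ha : ∀ x ∈ a, x < m) :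
    ∑ i ∈ Finset.range a.length, F (a ++ m :: b) i
      + (if 0 < a.length ∧ (a ++ b).getD (a.length - 1) 0 > (a ++ b).getD a.length 0
          then a.length else 0)
      = ∑ i ∈ Finset.range a.length, F (a ++ b) i := by
  rcases Nat.eq_zero_or_pos a.length with h | h
  · simp [h]
  · obtain ⟨q, hq⟩ : ∃ q, a.length = q + 1 := ⟨a.length - 1, by omega⟩
    rw [hq, Finset.sum_range_succ, Finset.sum_range_succ]
    have hterm : F (a ++ m :: b) q = 0 := by
      unfold F
      have h1 : (a ++ m :: b).getD q 0 = a.getD q 0 := List.getD_append _ _ _ _ (by omega)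
      have h2 : (a ++ m :: b).getD (q+1) 0 = m := by rw [← hq]; exact getD_mid a b m
      rw [h1, h2]
      have : a.getD q 0 < m := by
        rw [List.getD_eq_getElem _ _ (by omega)]
        exact ha _ (List.getElem_mem _)
      rw [if_neg (by omega)]
    have hcongr : ∑ i ∈ Finset.range q, F (a ++ m :: b) i
        = ∑ i ∈ Finset.range q, F (a ++ b) i := by
      apply Finset.sum_congr rfl
      intro i hi
      simp only [Finset.mem_range] at hi
      unfold F
      rw [getD_left a b m i (by omega), getD_left a b m (i+1) (by omega)]
    have hFu : F (a ++ b) q = if 0 < q + 1 ∧ (a ++ b).getD (q + 1 - 1) 0 > (a ++ b).getD (q+1) 0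
          then q + 1 else 0 := by
      unfold F
      simp only [Nat.add_sub_cancel]
      by_cases hc : (a ++ b).getD q 0 > (a ++ b).getD (q+1) 0 <;> simp [hc]
    rw [hterm, hcongr, hFu]
    omega

lemma maj_eq_sum (w : List ℕ) :
    maj w = ∑ i ∈ Finset.range (w.length - 1), F w i := by
  unfold maj ligne F
  rw [Finset.sum_filter]
  rw [← Finset.Ico_add_one_right_eq_Icc, Finset.sum_Ico_eq_sum_range]
  rcases Nat.eq_zero_or_pos w.length with h | h
  · simp [h]
  · have : w.length - 1 + 1 - 1 = w.length - 1 := by omega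
    rw [this]
    apply Finset.sum_congr rfl
    intro i _
    have h1 : 1 + i - 1 = i := by omega
    rw [h1]
    have h2 : 1 + i = i + 1 := by omega
    rw [h2]

lemma sum_range_add' (f : ℕ → ℕ) (c d : ℕ) :
    ∑ i ∈ Finset.range (c + d), f i
      = ∑ i ∈ Finset.range c, f i + ∑ i ∈ Finset.range d, f (c + i) := by
  induction d with
  | zero => simp
  | succ d ih => rw [← Nat.add_assoc, Finset.sum_range_succ, ih, Finset.sum_range_succ]; ring

/-- Key insertion lemma. -/
lemma maj_insert (a b : List ℕ) (m : ℕ) (ha : ∀ x ∈ a, x < m) (hb : ∀ x ∈ b, x < m) :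
    maj (a ++ m :: b) = maj (a ++ b) + g (a ++ b) a.length := by
  rcases b with _ | ⟨b0, b'⟩
  · -- b = [], insertion at the end
    rw [List.append_nil]
    have hg : g a a.length = 0 := by unfold g; simp
    rw [hg, maj_eq_sum, maj_eq_sum, Nat.add_zero]
    have hl2 : (a ++ m :: []).length - 1 = a.length := by simp
    rw [hl2]
    rcases Nat.eq_zero_or_pos a.length with h0 | h0
    · simp [h0]
    · obtain ⟨q, hq⟩ : ∃ q, a.length = q + 1 := ⟨a.length - 1, by omega⟩
      rw [hq, Finset.sum_range_succ]
      have hterm : F (a ++ [m]) q = 0 := by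
        unfold F
        have h1 : (a ++ [m]).getD q 0 = a.getD q 0 := List.getD_append _ _ _ _ (by omega)
        have h2 : (a ++ [m]).getD (q+1) 0 = m := by rw [← hq]; exact getD_mid a [] m
        rw [h1, h2]
        have : a.getD q 0 < m := by
          rw [List.getD_eq_getElem _ _ (by omega)]
          exact ha _ (List.getElem_mem _)
        rw [if_neg (by omega)]
      rw [hterm]
      have hql : q + 1 - 1 = q := by omega
      rw [hql, Nat.add_zero]
      apply Finset.sum_congr rfl
      intro i hi
      simp only [Finset.mem_range] at hi
      unfold F
      rw [List.getD_append _ _ _ _ (by omega), List.getD_append _ _ _ _ (by omega)]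
  · -- b = b0 :: b'
    set p := a.length with hp
    set b := b0 :: b' with hbdef
    set u := a ++ b with hu
    set v := a ++ m :: b with hv
    have hul : u.length = p + b.length := by rw [hu, List.length_append, hp]
    have hvl : v.length = p + b.length + 1 := by
      rw [hv, List.length_append, List.length_cons, hp]; omega
    obtain ⟨n', hn'⟩ : ∃ n', b.length = n' + 1 := ⟨b'.length, by rw [hbdef]; rfl⟩
    -- maj v split
    have e1 : maj v = ∑ i ∈ Finset.range p, F v i + (∑ i ∈ Finset.range (n'+1), F v (p + i)) := by
      rw [maj_eq_sum, hvl, hn']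
      have : p + (n' + 1) + 1 - 1 = p + (n'+1) := by omega
      rw [this, sum_range_add']
    have e2 : ∑ i ∈ Finset.range (n'+1), F v (p + i)
        = ∑ i ∈ Finset.range n', F v (p + (i+1)) + F v (p + 0) := Finset.sum_range_succ' _ _
    have hb0 : b.getD 0 0 = b0 := by rw [hbdef]; rfl
    have e3 : F v (p + 0) = p + 1 := by
      have h1 : v.getD (p + 0) 0 = m := by rw [Nat.add_zero]; exact getD_mid a b m
      have h2 : v.getD (p + 0 + 1) 0 = b.getD 0 0 := by
        have := getD_right a b m 0
        rw [← this]
      have hlt : v.getD (p + 0) 0 > v.getD (p + 0 + 1) 0 := by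
        rw [h1, h2, hb0]
        exact hb b0 (by rw [hbdef]; exact List.mem_cons_self)
      unfold F
      rw [if_pos hlt]
    have e4 : maj u = ∑ i ∈ Finset.range p, F u i + ∑ i ∈ Finset.range n', F u (p + i) := by
      rw [maj_eq_sum, hul, hn']
      have : p + (n' + 1) - 1 = p + n' := by omega
      rw [this, sum_range_add']
    -- pointwise comparison on the right part
    have e5 : ∑ i ∈ Finset.range n', F v (p + (i+1))
        = ∑ i ∈ Finset.range n', (F u (p + i) + (if u.getD (p+i) 0 > u.getD (p+i+1) 0 then 1 else 0)) := by
      apply Finset.sum_congr rfl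
      intro i hi
      unfold F
      have h1 : v.getD (p + (i+1)) 0 = b.getD i 0 := by
        have := getD_right a b m i
        rw [← this]; congr 1 <;> omega
      have h2 : v.getD (p + (i+1) + 1) 0 = b.getD (i+1) 0 := by
        have := getD_right a b m (i+1)
        rw [← this]; congr 1 <;> omega
      have h3 : u.getD (p + i) 0 = b.getD i 0 := getD_u_right a b i
      have h4 : u.getD (p + i + 1) 0 = b.getD (i+1) 0 := by
        have := getD_u_right a b (i+1)
        rw [← this]; congr 1 <;> omega
      rw [h1, h2, h3, h4]
      split_ifs <;> omega
    have e6 : S u p = ∑ i ∈ Finset.range n', (if u.getD (p+i) 0 > u.getD (p+i+1) 0 then 1 else 0) := by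
      unfold S
      rw [hul, hn']
      have : p + (n' + 1) - 1 - p = n' := by omega
      rw [Finset.sum_Ico_eq_sum_range, this]
    have e7 := sum_prefix a b m ha
    rw [← hp, ← hu, ← hv] at e7
    have hgne : p ≠ u.length := by omega
    unfold g
    rw [if_neg hgne]
    rw [Finset.sum_add_distrib] at e5
    by_cases hJ : 0 < p ∧ u.getD (p-1) 0 > u.getD p 0
    · rw [if_pos hJ]
      rw [if_pos hJ] at e7
      omega
    · rw [if_neg hJ]
      rw [if_neg hJ] at e7
      omega

lemma S_le (u : List ℕ) (p : ℕ) : S u p ≤ u.length - 1 - p := by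
  unfold S
  calc ∑ i ∈ Finset.Ico p (u.length - 1), (if u.getD i 0 > u.getD (i+1) 0 then 1 else 0)
      ≤ ∑ _i ∈ Finset.Ico p (u.length - 1), 1 := by
        apply Finset.sum_le_sum; intro i _; split_ifs <;> omega
    _ = u.length - 1 - p := by rw [Finset.sum_const, Nat.card_Ico, smul_eq_mul, mul_one]

lemma g_le (u : List ℕ) (p : ℕ) (hp : p ≤ u.length) : g u p ≤ u.length := by
  unfold g
  split_ifs with h1 h2
  · omega
  · have := S_le u p; omega
  · have := S_le u p
    have : p ≠ u.length := h1
    omega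

lemma g_pos (u : List ℕ) (p : ℕ) (hp : p ≠ u.length) : 1 ≤ g u p := by
  unfold g
  rw [if_neg hp]
  split_ifs <;> omega

lemma g_inj_aux (u : List ℕ) {p q : ℕ} (hpq : p < q) (hq : q ≤ u.length) :
    g u p ≠ g u q := by
  intro heq
  rcases eq_or_lt_of_le hq with h | h
  · have h0 : g u q = 0 := by unfold g; rw [if_pos h]
    have := g_pos u p (by omega)
    omega
  · -- q < u.length
    have hsplit : S u p = (∑ i ∈ Finset.Ico p q, (if u.getD i 0 > u.getD (i+1) 0 then 1 else 0)) + S u q := by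
      unfold S
      rw [Finset.sum_Ico_consecutive _ (le_of_lt hpq) (by omega)]
    set T := ∑ i ∈ Finset.Ico p q, (if u.getD i 0 > u.getD (i+1) 0 then 1 else 0) with hT
    have hTle : T ≤ q - p := by
      rw [hT]
      calc ∑ i ∈ Finset.Ico p q, (if u.getD i 0 > u.getD (i+1) 0 then 1 else 0)
          ≤ ∑ _i ∈ Finset.Ico p q, 1 := by
            apply Finset.sum_le_sum; intro i _; split_ifs <;> omega
        _ = q - p := by rw [Finset.sum_const, Nat.card_Ico, smul_eq_mul, mul_one]
    have hq1 : 1 ≤ q := by omega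
    unfold g at heq
    rw [if_neg (by omega : p ≠ u.length), if_neg (by omega : q ≠ u.length)] at heq
    by_cases hdq : u.getD (q-1) 0 > u.getD q 0
    · -- descent just before q : T ≥ 1
      have hmem : q - 1 ∈ Finset.Ico p q := by simp [Finset.mem_Ico]; omega
      have h1T : 1 ≤ T := by
        rw [hT]
        calc 1 = (if u.getD (q-1) 0 > u.getD (q-1+1) 0 then 1 else 0) := by
              rw [if_pos (by rw [(by omega : q - 1 + 1 = q)]; exact hdq)]
          _ ≤ _ := Finset.single_le_sum (f := fun i => if u.getD i 0 > u.getD (i+1) 0 then 1 else 0)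
                (by intro i _; omega) hmem
      split_ifs at heq <;> omega
    · -- no descent before q : T ≤ q - 1 - p
      have hTle' : T ≤ q - 1 - p := by
        rw [hT]
        obtain ⟨q', hq'⟩ : ∃ q', q = q' + 1 := ⟨q - 1, by omega⟩
        subst hq'
        rw [Finset.sum_Ico_succ_top (by omega)]
        rw [if_neg (by simpa using hdq)]
        calc (∑ i ∈ Finset.Ico p q', (if u.getD i 0 > u.getD (i+1) 0 then 1 else 0)) + 0
            ≤ ∑ _i ∈ Finset.Ico p q', 1 := by
              rw [Nat.add_zero]
              apply Finset.sum_le_sum; intro i _; split_ifs <;> omega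
          _ = _ := by rw [Finset.sum_const, Nat.card_Ico, smul_eq_mul, mul_one]; omega
      split_ifs at heq <;> omega

lemma g_inj (u : List ℕ) {p q : ℕ} (hp : p ≤ u.length) (hq : q ≤ u.length)
    (h : g u p = g u q) : p = q := by
  rcases lt_trichotomy p q with hlt | he | hlt
  · exact absurd h (g_inj_aux u hlt hq)
  · exact he
  · exact absurd h.symm (g_inj_aux u hlt hp)

lemma g_surj (u : List ℕ) (d : ℕ) (hd : d ≤ u.length) : ∃ p ≤ u.length, g u p = d := by
  set L := u.length with hL
  have hφ : Function.Injective (fun p : Fin (L+1) => (⟨g u p, Nat.lt_succ_of_le (g_le u p (Nat.lt_succ_iff.mp p.isLt))⟩ : Fin (L+1))) := by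
    intro p q hpq
    have := congrArg Fin.val hpq
    simp only at this
    exact Fin.ext (g_inj u (Nat.lt_succ_iff.mp p.isLt) (Nat.lt_succ_iff.mp q.isLt) this)
  obtain ⟨p, hpd⟩ := Finite.injective_iff_surjective.mp hφ ⟨d, Nat.lt_succ_of_le hd⟩
  refine ⟨p, Nat.lt_succ_iff.mp p.isLt, ?_⟩
  exact congrArg Fin.val hpd




lemma perm_length {n : ℕ} {w : List ℕ} (h : IsPermWord n w) : w.length = n := by
  have := h.length_eq
  rwa [List.length_range'] at this

lemma perm_mem {n : ℕ} {w : List ℕ} (h : IsPermWord n w) {x : ℕ} (hx : x ∈ w) :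
    1 ≤ x ∧ x ≤ n := by
  have := h.mem_iff.mp hx
  rw [List.mem_range'_1] at this
  omega

lemma range'_filter_le {n m : ℕ} (h : m ≤ n) :
    (List.range' 1 n).filter (· ≤ m) = List.range' 1 m := by
  have hsplit : List.range' 1 m ++ List.range' (1 + 1*m) (n - m) 1 = List.range' 1 (n - m + m) :=
    (Nat.add_comm (n - m) m) ▸ List.range'_append (s := 1) (m := m) (n := n-m) (step := 1)
  have h2 : n - m + m = n := by omega
  have h3 : 1 + 1*m = m + 1 := by omega
  rw [h2, h3] at hsplit
  rw [← hsplit, List.filter_append]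
  have e1 : (List.range' 1 m).filter (· ≤ m) = List.range' 1 m := by
    rw [List.filter_eq_self]
    intro x hx
    rw [List.mem_range'_1] at hx
    simpa using (by omega : x ≤ m)
  have e2 : (List.range' (m+1) (n - m) 1).filter (· ≤ m) = [] := by
    rw [List.filter_eq_nil_iff]
    intro x hx
    rw [List.mem_range'_1] at hx
    simpa using (by omega : ¬ x ≤ m)
  rw [e1, e2, List.append_nil]

lemma filter_perm {n m : ℕ} {w : List ℕ} (h : IsPermWord n w) (hm : m ≤ n) :
    IsPermWord m (w.filter (· ≤ m)) := by
  unfold IsPermWord at *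
  have := h.filter (· ≤ m)
  rwa [range'_filter_le hm] at this

lemma filter_all {n j : ℕ} {w : List ℕ} (h : IsPermWord n w) (hj : n ≤ j) :
    w.filter (· ≤ j) = w := by
  rw [List.filter_eq_self]
  intro x hx
  have := perm_mem h hx
  simpa using (by omega : x ≤ j)

lemma perm_decomp {n : ℕ} {w : List ℕ} (h : IsPermWord (n+1) w) :
    ∃ a b, w = a ++ (n+1) :: b ∧ w.filter (· ≤ n) = a ++ b ∧ IsPermWord n (a ++ b) := by
  have hmem : (n+1) ∈ w := by
    apply h.mem_iff.mpr
    rw [List.mem_range'_1]; omega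
  obtain ⟨a, b, hw⟩ := List.append_of_mem hmem
  refine ⟨a, b, hw, ?_, ?_⟩
  · -- filter
    have hnd : w.Nodup := (h.nodup_iff).mpr (List.nodup_range' (s := 1) (n := n+1))
    rw [hw] at hnd
    have hnotmem : (n+1) ∉ a ++ b := by
      rw [List.nodup_middle] at hnd
      exact (List.nodup_cons.mp hnd).1
    rw [hw, List.filter_append, List.filter_cons_of_neg (by simp)]
    have : ∀ l : List ℕ, (∀ x ∈ l, x ∈ w ∧ x ≠ n+1) → l.filter (· ≤ n) = l := by
      intro l hl
      rw [List.filter_eq_self]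
      intro x hx
      obtain ⟨hxw, hxne⟩ := hl x hx
      have := perm_mem h hxw
      simpa using (by omega : x ≤ n)
    rw [this a (fun x hx => ⟨by rw [hw]; simp [hx], fun he => hnotmem (by rw [← he]; simp [hx])⟩),
        this b (fun x hx => ⟨by rw [hw]; simp [hx], fun he => hnotmem (by rw [← he]; simp [hx])⟩)]
  · -- perm word
    have h1 : IsPermWord n (w.filter (· ≤ n)) := filter_perm h (by omega)
    have h2 : w.filter (· ≤ n) = a ++ b := by
      have hnd : w.Nodup := (h.nodup_iff).mpr (List.nodup_range' (s := 1) (n := n+1))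
      rw [hw] at hnd
      have hnotmem : (n+1) ∉ a ++ b := by
        rw [List.nodup_middle] at hnd
        exact (List.nodup_cons.mp hnd).1
      rw [hw, List.filter_append, List.filter_cons_of_neg (by simp)]
      have : ∀ l : List ℕ, (∀ x ∈ l, x ∈ w ∧ x ≠ n+1) → l.filter (· ≤ n) = l := by
        intro l hl
        rw [List.filter_eq_self]
        intro x hx
        obtain ⟨hxw, hxne⟩ := hl x hx
        have := perm_mem h hxw
        simpa using (by omega : x ≤ n)
      rw [this a (fun x hx => ⟨by rw [hw]; simp [hx], fun he => hnotmem (by rw [← he]; simp [hx])⟩),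
          this b (fun x hx => ⟨by rw [hw]; simp [hx], fun he => hnotmem (by rw [← he]; simp [hx])⟩)]
    rwa [h2] at h1

lemma list_sum_range (f : ℕ → ℕ) (n : ℕ) :
    ((List.range n).map f).sum = ∑ i ∈ Finset.range n, f i := by
  induction n with
  | zero => simp
  | succ n ih => rw [List.range_succ, List.map_append, List.sum_append, Finset.sum_range_succ, ih]; simp

lemma majcode_length (w : List ℕ) : (majcode w).length = w.length := by
  simp [majcode]

lemma majcode_append {n : ℕ} (a b : List ℕ) (h : IsPermWord n (a ++ b)) :
    majcode (a ++ (n+1) :: b) = majcode (a ++ b) ++ [g (a ++ b) a.length] := by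
  have hul : (a ++ b).length = n := perm_length h
  have hwl : (a ++ (n+1) :: b).length = n + 1 := by
    simp at hul ⊢; omega
  have hfil : ∀ j ≤ n, (a ++ (n+1) :: b).filter (· ≤ j) = (a ++ b).filter (· ≤ j) := by
    intro j hj
    rw [List.filter_append, List.filter_append, List.filter_cons_of_neg (by simp; omega)]
  unfold majcode
  rw [hwl, hul, List.range_succ, List.map_append]
  congr 1
  · apply List.map_congr_left
    intro i hi
    rw [List.mem_range] at hi
    rw [hfil (i+1) (by omega), hfil i (by omega)]
  · simp only [List.map_cons, List.map_nil]
    congr 1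
    have h1 : (a ++ (n+1) :: b).filter (· ≤ n+1) = a ++ (n+1) :: b := by
      rw [List.filter_eq_self]
      intro x hx
      simp only [List.mem_append, List.mem_cons] at hx
      have : x ≤ n + 1 := by
        rcases hx with hx | hx | hx
        · exact le_trans (perm_mem h (by simp [hx])).2 (by omega)
        · omega
        · exact le_trans (perm_mem h (by simp [hx])).2 (by omega)
      simpa using this
    have h2 : (a ++ (n+1) :: b).filter (· ≤ n) = a ++ b := by
      rw [hfil n le_rfl, filter_all h le_rfl]
    rw [h1, h2]
    have hins : maj (a ++ (n+1) :: b) = maj (a ++ b) + g (a ++ b) a.length := by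
      apply maj_insert
      · intro x hx
        have := (perm_mem h (show x ∈ a ++ b by simp [hx])).2; omega
      · intro x hx
        have := (perm_mem h (show x ∈ a ++ b by simp [hx])).2; omega
    rw [hins]
    omega

/-- key step relation -/
lemma maj_filter_succ {n : ℕ} {w : List ℕ} (h : IsPermWord n w) {i : ℕ} (hi : i < n) :
    ∃ p ≤ i, maj (w.filter (· ≤ i+1)) = maj (w.filter (· ≤ i)) + g (w.filter (· ≤ i)) p := by
  have hv : IsPermWord (i+1) (w.filter (· ≤ i+1)) := filter_perm h (by omega)
  obtain ⟨a, b, hdec, hfil, hab⟩ := perm_decomp hv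
  have hff : (w.filter (· ≤ i+1)).filter (· ≤ i) = w.filter (· ≤ i) := by
    rw [List.filter_filter]
    apply List.filter_congr
    intro x _
    by_cases hx : x ≤ i <;> simp [hx] <;> omega
  have hwu : w.filter (· ≤ i) = a ++ b := by rw [← hff, hfil]
  have hul : (a ++ b).length = i := perm_length hab
  refine ⟨a.length, ?_, ?_⟩
  · have : a.length ≤ (a ++ b).length := by simp
    omega
  · rw [hwu, hdec]
    apply maj_insert
    · intro x hx
      have := (perm_mem hab (show x ∈ a ++ b by simp [hx])).2; omega
    · intro x hx
      have := (perm_mem hab (show x ∈ a ++ b by simp [hx])).2; omega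

lemma majcode_getD {w : List ℕ} {i : ℕ} (hi : i < w.length) :
    (majcode w).getD i 0 = maj (w.filter (· ≤ i+1)) - maj (w.filter (· ≤ i)) := by
  unfold majcode
  rw [List.getD_eq_getElem _ _ (by simpa using hi), List.getElem_map, List.getElem_range]

lemma majcode_subexc {n : ℕ} {w : List ℕ} (h : IsPermWord n w) : Subexcedent (majcode w) := by
  intro i hi
  rw [majcode_length, perm_length h] at hi
  rw [majcode_getD (by rw [perm_length h]; exact hi)]
  obtain ⟨p, hp, heq⟩ := maj_filter_succ h hi
  rw [heq]
  have hulen : (w.filter (· ≤ i)).length = i := perm_length (filter_perm h (le_of_lt hi))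
  have := g_le (w.filter (· ≤ i)) p (by omega)
  omega

lemma majcode_sum {n : ℕ} {w : List ℕ} (h : IsPermWord n w) : (majcode w).sum = maj w := by
  unfold majcode
  rw [perm_length h, list_sum_range]
  have hmono : Monotone (fun j => maj (w.filter (· ≤ j))) := by
    apply monotone_nat_of_le_succ
    intro j
    rcases lt_or_ge j n with hj | hj
    · obtain ⟨p, hp, heq⟩ := maj_filter_succ h hj
      simp only [heq]
      omega
    · simp only [filter_all h hj, filter_all h (by omega : n ≤ j + 1)]
      exact le_rfl
  rw [Finset.sum_range_tsub hmono n]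
  rw [filter_all h le_rfl]
  have h0 : w.filter (· ≤ 0) = [] := by
    rw [List.filter_eq_nil_iff]
    intro x hx
    have := perm_mem h hx
    simpa using (by omega : ¬ x ≤ 0)
  rw [h0]
  have h1 : maj ([] : List ℕ) = 0 := by simp [maj, ligne]
  rw [h1]
  omega

lemma majcode_injective : ∀ n w w', IsPermWord n w → IsPermWord n w' →
    majcode w = majcode w' → w = w' := by
  intro n
  induction n with
  | zero =>
    intro w w' hw hw' _
    rw [List.eq_nil_of_length_eq_zero (perm_length hw),
      List.eq_nil_of_length_eq_zero (perm_length hw')]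
  | succ n ih =>
    intro w w' hw hw' heq
    obtain ⟨a, b, hdec, -, hab⟩ := perm_decomp hw
    obtain ⟨a', b', hdec', -, hab'⟩ := perm_decomp hw'
    rw [hdec, hdec'] at heq ⊢
    rw [majcode_append a b hab, majcode_append a' b' hab'] at heq
    have hlen : (majcode (a ++ b)).length = (majcode (a' ++ b')).length := by
      rw [majcode_length, majcode_length, perm_length hab, perm_length hab']
    obtain ⟨h1, h2⟩ := List.append_inj heq hlen
    have hu : a ++ b = a' ++ b' := ih _ _ hab hab' h1
    have hg : g (a ++ b) a.length = g (a' ++ b') a'.length := by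
      simpa using h2
    rw [← hu] at hg
    have hplen : a.length = a'.length := by
      apply g_inj (a ++ b) (by simp) _ hg
      rw [hu]; simp
    obtain ⟨ha, hb⟩ := List.append_inj hu hplen
    rw [ha, hb]

lemma majcode_surjective : ∀ n d, d.length = n → Subexcedent d →
    ∃ w, IsPermWord n w ∧ majcode w = d := by
  intro n
  induction n with
  | zero =>
    intro d hd _
    refine ⟨[], ?_, ?_⟩
    · simp [IsPermWord]
    · rw [List.eq_nil_of_length_eq_zero hd]; rfl
  | succ n ih =>
    intro d hd hsub
    have hne : d ≠ [] := by intro h; rw [h] at hd; simp at hd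
    set d' := d.dropLast with hd'
    set e := d.getLast hne with he'
    have hde : d' ++ [e] = d := List.dropLast_append_getLast hne
    have hd'len : d'.length = n := by rw [hd', List.length_dropLast, hd]; omega
    have hsub' : Subexcedent d' := by
      intro i hi
      have hh : d.getD i 0 ≤ i := hsub i (by omega)
      rw [← hde, List.getD_append _ _ _ _ (by omega)] at hh
      exact hh
    have he : e ≤ n := by
      have h1 : d.getD n 0 ≤ n := hsub n (by omega)
      rw [← hde, List.getD_append_right _ _ _ _ (by omega)] at h1
      simpa [hd'len] using h1
    obtain ⟨u, hu, hmc⟩ := ih d' hd'len hsub'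
    have hulen : u.length = n := perm_length hu
    obtain ⟨p, hp, hg⟩ := g_surj u e (by omega)
    set a := u.take p with ha'
    set b := u.drop p with hb'
    have hab : a ++ b = u := List.take_append_drop p u
    have halen : a.length = p := by rw [ha', List.length_take]; omega
    refine ⟨a ++ (n+1) :: b, ?_, ?_⟩
    · unfold IsPermWord
      have s1 : (a ++ (n+1) :: b).Perm ((n+1) :: (a ++ b)) := List.perm_middle
      have s2 : ((n+1) :: (a ++ b)).Perm ((n+1) :: List.range' 1 n) := by
        rw [hab]; exact hu.cons _
      have s3 : (List.range' 1 n ++ [n+1]).Perm ((n+1) :: List.range' 1 n) :=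
        List.perm_append_singleton _ _
      have s4 : List.range' 1 (n+1) = List.range' 1 n ++ [n+1] := by
        have h5 : 1 + 1*n = n + 1 := by omega
        rw [List.range'_concat, h5]
      rw [s4]
      exact (s1.trans s2).trans s3.symm
    · have hperm : IsPermWord n (a ++ b) := by rw [hab]; exact hu
      rw [majcode_append a b hperm, hab, halen, hmc, hg, hde]


theorem stmt4 (n : ℕ) :
    Set.BijOn majcode {w | IsPermWord n w} {w | w.length = n ∧ Subexcedent w} ∧
      ∀ w : List ℕ, IsPermWord n w → (majcode w).sum = maj w := by
  constructor
  · refine ⟨?_, ?_, ?_⟩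
    · intro w hw
      simp only [Set.mem_setOf_eq] at hw ⊢
      exact ⟨by rw [majcode_length, perm_length hw], majcode_subexc hw⟩
    · intro w hw w' hw' heq
      exact majcode_injective n w w' hw hw' heq
    · intro d hd
      simp only [Set.mem_setOf_eq] at hd
      obtain ⟨w, hw, hmc⟩ := majcode_surjective n d hd.1 hd.2
      exact ⟨w, hw, hmc⟩
  · intro w hw; exact majcode_sum hw
end

section
/- For every permutation σ ∈ S_n, Mc σ = r(δ(Majcode(c σ))), where c is the complement map on permutations, δ is the complement on subexcedent words, and r reverses a word. -/
def desR : List ℕ → ℕ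
  | [] => 0
  | [_] => 0
  | x :: y :: t => (if y < x then 1 else 0) + desR (y :: t)

def majR : List ℕ → ℕ
  | [] => 0
  | [_] => 0
  | x :: y :: t => (if y < x then 1 else 0) + majR (y :: t) + desR (y :: t)

def majS (w : List ℕ) : ℕ :=
  ∑ k ∈ Finset.range (w.length - 1), (if w.getD (k+1) 0 < w.getD k 0 then k+1 else 0)

def desS (w : List ℕ) : ℕ :=
  ∑ k ∈ Finset.range (w.length - 1), (if w.getD (k+1) 0 < w.getD k 0 then 1 else 0)

lemma maj_eq_majS (w : List ℕ) : maj w = majS w := by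
  unfold maj ligne majS
  rw [Finset.sum_filter]
  have h : Finset.Icc 1 (w.length - 1) = Finset.Ico 1 (w.length - 1 + 1) := by
    ext x; simp [Nat.lt_succ_iff]
  rw [h, Finset.sum_Ico_eq_sum_range]
  have h2 : w.length - 1 + 1 - 1 = w.length - 1 := by omega
  rw [h2]
  apply Finset.sum_congr rfl
  intro k _
  simp [Nat.add_sub_cancel, Nat.add_comm 1 k, gt_iff_lt]

lemma desS_cons (x y : ℕ) (t : List ℕ) :
    desS (x :: y :: t) = (if y < x then 1 else 0) + desS (y :: t) := by
  unfold desS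
  simp only [List.length_cons, Nat.add_sub_cancel]
  rw [Finset.sum_range_succ']
  simp only [List.getD_cons_succ, List.getD_cons_zero]
  omega

lemma majS_cons (x y : ℕ) (t : List ℕ) :
    majS (x :: y :: t) = (if y < x then 1 else 0) + majS (y :: t) + desS (y :: t) := by
  unfold majS desS
  simp only [List.length_cons, Nat.add_sub_cancel]
  rw [Finset.sum_range_succ']
  simp only [List.getD_cons_succ, List.getD_cons_zero]
  have hsplit : ∀ k ∈ Finset.range t.length,
      (if t.getD k 0 < (y :: t).getD k 0 then k+1+1 else 0)
      = (if t.getD k 0 < (y :: t).getD k 0 then k+1 else 0)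
        + (if t.getD k 0 < (y :: t).getD k 0 then 1 else 0) := by
    intro k _; split <;> simp
  rw [Finset.sum_congr rfl hsplit, Finset.sum_add_distrib]
  simp only [Nat.zero_add]
  omega

lemma desS_eq (w : List ℕ) : desS w = desR w := by
  induction w with
  | nil => rfl
  | cons x t ih =>
    cases t with
    | nil => rfl
    | cons y t' => rw [desS_cons, ih, desR]

lemma majS_eq (w : List ℕ) : majS w = majR w := by
  induction w with
  | nil => rfl
  | cons x t ih =>
    cases t with
    | nil => rfl
    | cons y t' => rw [majS_cons, ih, desS_eq, majR]

lemma maj_eq_majR (w : List ℕ) : maj w = majR w := by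
  rw [maj_eq_majS, majS_eq]

lemma desR_le (w : List ℕ) : desR w ≤ w.length := by
  induction w with
  | nil => simp [desR]
  | cons x t ih =>
    cases t with
    | nil => simp [desR]
    | cons y t' =>
      rw [desR]
      simp only [List.length_cons] at *
      split <;> omega

def triangle : ℕ → ℕ
  | 0 => 0
  | (m+1) => triangle m + m

lemma comp_majR (N : ℕ) (u : List ℕ) (h1 : u.Chain' (· ≠ ·)) (h2 : ∀ x ∈ u, x ≤ N) :
    majR (u.map (fun x => N + 1 - x)) + majR u = triangle u.length ∧
    desR (u.map (fun x => N + 1 - x)) + desR u = u.length - 1 := by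
  induction u with
  | nil => simp [majR, desR, triangle]
  | cons x t ih =>
    cases t with
    | nil => simp [majR, desR, triangle]
    | cons y t' =>
      have hxy : x ≠ y := (List.isChain_cons_cons.mp h1).1
      have hx : x ≤ N := h2 x (by simp)
      have hy : y ≤ N := h2 y (by simp)
      have ih' := ih (List.isChain_cons_cons.mp h1).2 (fun z hz => h2 z (by simp [hz]))
      simp only [List.map_cons] at *
      rw [majR, desR, majR, desR]
      have hflip : (if N + 1 - y < N + 1 - x then (1:ℕ) else 0) + (if y < x then 1 else 0) = 1 := by
        rcases lt_or_gt_of_ne hxy with h | h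
        · rw [if_pos (by omega), if_neg (by omega)]
        · rw [if_neg (by omega), if_pos (by omega)]
      have ht : triangle ((y :: t').length + 1) = triangle (y :: t').length + (y :: t').length := rfl
      simp only [List.length_cons] at *
      omega

lemma removal (μ : ℕ) (a b : List ℕ) (ha : ∀ x ∈ a, μ < x) (hb : ∀ x ∈ b, μ < x) :
    desR (a ++ b) ≤ desR (a ++ μ :: b) ∧ desR (a ++ μ :: b) ≤ desR (a ++ b) + 1 ∧
    majR (a ++ b) ≤ majR (a ++ μ :: b) ∧
    majR (a ++ μ :: b) ≤ majR (a ++ b) + a.length + b.length := by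
  induction a with
  | nil =>
    simp only [List.nil_append, List.length_nil]
    cases b with
    | nil => simp [majR, desR]
    | cons y b' =>
      have hy : μ < y := hb y (by simp)
      rw [desR, majR, if_neg (by omega : ¬ y < μ)]
      have := desR_le (y :: b')
      simp only [List.length_cons] at *
      omega
  | cons x a' ih =>
    cases a' with
    | nil =>
      have hx : μ < x := ha x (by simp)
      cases b with
      | nil =>
        simp only [List.cons_append, List.nil_append, List.append_nil]
        simp only [desR, majR, if_pos hx, List.length_cons, List.length_nil]
        omega
      | cons y b' =>
        have hy : μ < y := hb y (by simp)
        simp only [List.cons_append, List.nil_append]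
        simp only [desR, majR, if_pos hx, if_neg (by omega : ¬ y < μ)]
        have := desR_le (y :: b')
        simp only [List.length_cons, List.length_nil] at *
        by_cases hxy : y < x <;> simp only [if_pos, if_neg, hxy, if_true, if_false] <;> omega
    | cons z a'' =>
      have ih' := ih (fun v hv => ha v (by simp at hv ⊢; tauto))
      simp only [List.cons_append] at *
      rw [desR, majR, desR, majR]
      simp only [List.length_cons] at *
      omega

lemma filter_range'_length (n m : ℕ) :
    ((List.range' 1 n).filter (fun x => decide (m ≤ x))).length = n + 1 - max m 1 := by
  induction n with
  | zero => simp
  | succ k ih =>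
    rw [List.range'_concat, List.filter_append, List.length_append, ih]
    by_cases h : m ≤ 1 + 1 * k
    · rw [List.filter_cons, if_pos (by simpa using h)]
      simp; omega
    · rw [List.filter_cons, if_neg (by simpa using h)]
      simp; omega

theorem stmt10 (n : ℕ) (w : List ℕ) (hw : IsPermWord n w) :
    mc w = (deltaC (majcode (w.map (fun x => n + 1 - x)))).reverse := by
  classical
  have hperm : w.Perm (List.range' 1 n) := hw
  have hlen : w.length = n := by simpa using hperm.length_eq
  have hnodup : w.Nodup := hperm.nodup_iff.mpr (List.nodup_range' (s := 1) (n := n))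
  have hmem : ∀ x ∈ w, 1 ≤ x ∧ x ≤ n := by
    intro x hx
    have h := hperm.mem_iff.mp hx
    rw [List.mem_range'] at h
    obtain ⟨i, hi, hx'⟩ := h
    omega
  have hflen : ∀ m : ℕ, 1 ≤ m →
      (w.filter (fun x => decide (m ≤ x))).length = n + 1 - m := by
    intro m hm
    have := (hperm.filter (fun x => decide (m ≤ x))).length_eq
    rw [this, filter_range'_length]
    omega
  -- complement identity for filtered subwords
  have hcomp : ∀ m : ℕ,
      majR ((w.filter (fun x => decide (m ≤ x))).map (fun x => n + 1 - x))
        + majR (w.filter (fun x => decide (m ≤ x)))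
        = triangle (w.filter (fun x => decide (m ≤ x))).length := by
    intro m
    have hnd : (w.filter (fun x => decide (m ≤ x))).Nodup := hnodup.filter _
    exact (comp_majR n _ hnd.isChain
      (fun x hx => (hmem x (List.mem_of_mem_filter hx)).2)).1
  -- filter of the complement word
  have hfiltc : ∀ k : ℕ,
      (w.map (fun x => n + 1 - x)).filter (fun x => decide (x ≤ k))
        = (w.filter (fun x => decide (n + 1 - k ≤ x))).map (fun x => n + 1 - x) := by
    intro k
    rw [List.filter_map]
    congr 1
    apply List.filter_congr
    intro x _
    simp only [Function.comp_apply, decide_eq_decide]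
    omega
  apply List.ext_getElem
  · simp [mc, majcode, deltaC, hlen]
  intro j h1 h2
  have hjn : j < n := by simpa [mc, hlen] using h1
  rw [List.getElem_reverse]
  have hdlen : (deltaC (majcode (w.map (fun x => n + 1 - x)))).length = n := by
    simp [majcode, deltaC, hlen]
  simp only [mc, deltaC, majcode, List.getElem_map, List.getElem_range, List.length_map,
    List.length_range, hlen]
  set i := n - 1 - j with hi
  have hij : i = n - 1 - j := hi
  have hni : n - i = j + 1 := by omega
  have hni' : n + 1 - i = j + 2 := by omega
  -- the two subwords
  set u₁ := w.filter (fun x => decide (j + 1 ≤ x)) with hu1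
  set u₂ := w.filter (fun x => decide (j + 2 ≤ x)) with hu2
  have hgd : (List.map
      (fun i => maj (List.filter (fun x => decide (x ≤ i + 1)) (w.map (fun x => n + 1 - x)))
        - maj (List.filter (fun x => decide (x ≤ i)) (w.map (fun x => n + 1 - x))))
      (List.range n)).getD i 0
      = maj ((w.map (fun x => n + 1 - x)).filter (fun x => decide (x ≤ i + 1)))
        - maj ((w.map (fun x => n + 1 - x)).filter (fun x => decide (x ≤ i))) := by
    rw [List.getD_eq_getElem _ _ (by simp; omega)]
    rw [List.getElem_map, List.getElem_range]
  rw [hgd, hfiltc (i+1), hfiltc i]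
  have e1 : n + 1 - (i + 1) = j + 1 := by omega
  rw [e1, hni']
  rw [← hu1, ← hu2]
  -- lengths
  have hl1 : u₁.length = n - j := by rw [hu1, hflen (j+1) (by omega)]; omega
  have hl2 : u₂.length = n - j - 1 := by rw [hu2, hflen (j+2) (by omega)]; omega
  -- removal: split u₁ around j+1
  have hmemu : j + 1 ∈ u₁ := by
    rw [hu1, List.mem_filter]
    refine ⟨hperm.mem_iff.mpr ?_, by simp⟩
    rw [List.mem_range']
    exact ⟨j, by omega, by omega⟩
  obtain ⟨a, b, hab⟩ := List.append_of_mem hmemu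
  have hnd1 : u₁.Nodup := hnodup.filter _
  have hndab : (a ++ (j+1) :: b).Nodup := hab ▸ hnd1
  have hja : j + 1 ∉ a := fun hja =>
    (List.disjoint_of_nodup_append hndab) hja (by simp)
  have hjb : j + 1 ∉ b := by
    have := (List.nodup_append.mp hndab).2.1
    exact (List.nodup_cons.mp this).1
  have hmema : ∀ x ∈ a ++ b, j + 1 < x := by
    intro x hx
    have hxu : x ∈ u₁ := by
      rw [hab]
      rcases List.mem_append.mp hx with h | h
      · exact List.mem_append.mpr (Or.inl h)
      · exact List.mem_append.mpr (Or.inr (List.mem_cons_of_mem _ h))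
    have hx1 : j + 1 ≤ x := by
      rw [hu1] at hxu
      have := (List.mem_filter.mp hxu).2
      simpa using this
    have hxne : x ≠ j + 1 := by
      rintro rfl
      rcases List.mem_append.mp hx with h | h
      · exact hja h
      · exact hjb h
    omega
  have hu2ab : u₂ = a ++ b := by
    have h21 : u₂ = u₁.filter (fun x => decide (j + 2 ≤ x)) := by
      rw [hu1, hu2, List.filter_filter]
      apply List.filter_congr
      intro x _
      by_cases h : j + 2 ≤ x
      · simp [h, show j + 1 ≤ x by omega]
      · simp [h]
    rw [h21, hab, List.filter_append, List.filter_cons]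
    rw [if_neg (by simp)]
    rw [List.filter_eq_self.mpr (fun x hx => by
        simpa using (by have := hmema x (List.mem_append.mpr (Or.inl hx)); omega : j + 2 ≤ x)),
      List.filter_eq_self.mpr (fun x hx => by
        simpa using (by have := hmema x (List.mem_append.mpr (Or.inr hx)); omega : j + 2 ≤ x))]
  have hrem := removal (j+1) a b
    (fun x hx => hmema x (List.mem_append.mpr (Or.inl hx)))
    (fun x hx => hmema x (List.mem_append.mpr (Or.inr hx)))
  rw [← hu2ab, ← hab] at hrem
  have hablen : a.length + b.length = n - j - 1 := by
    have := congrArg List.length hu2ab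
    simp at this; omega
  -- assemble
  have f1 := hcomp (j+1)
  have f2 := hcomp (j+2)
  rw [← hu1, hl1] at f1
  rw [← hu2, hl2] at f2
  have ftri : triangle (n - j) = triangle (n - j - 1) + (n - j - 1) := by
    have h' : n - j = (n - j - 1) + 1 := by omega
    rw [h']; rfl
  simp only [maj_eq_majR]
  omega
end
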